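/- Let d ≥ 1 be an integer, α > 2d real, σ = (2d+2)/(α+2), and let X, K, v > 0 be reals. Define 𝒞(r,t) = 2X e^{vt − r^{1−σ}} + K t r^{−σα} (1 + r^{σd}(vt)^d) for r, t > 0. Then for every real γ > (α+2)/(α−2d): lim_{t→∞} t ∫_{t^γ}^∞ r^{d−1} 𝒞(r,t) dr = 0 (in particular the integral is finite for every t > 0). -/

import Mathlib

open Filter Real MeasureTheory

/-- The functional form of the Lieb-Robinson bound after one step of the paper's
iterative construction (Eq. (26)):
`𝒞(r,t) = 2X e^{vt − r^{1−σ}} + K t r^{−σα}(1 + r^{σd}(vt)^d)`. -/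
noncomputable def lrBound (X K v σ α : ℝ) (d : ℕ) (r t : ℝ) : ℝ :=
  2 * X * Real.exp (v * t - r ^ (1 - σ)) +
    K * t * r ^ (-(σ * α)) * (1 + r ^ (σ * (d : ℝ)) * (v * t) ^ d)

/-- `exp(-x/2) ≤ n! 2ⁿ x^{-n}` specialized to `x = r^p`. -/
lemma exp_rpow_tail_bound {p : ℝ} (n : ℕ) {r : ℝ} (hr : 0 < r) :
    Real.exp (-(r ^ p / 2)) ≤ (n.factorial : ℝ) * 2 ^ n * r ^ (-(p * n)) := by
  have h0 : (0:ℝ) < r ^ p := Real.rpow_pos_of_pos hr p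
  have h1 : (r ^ p / 2) ^ n / (n.factorial : ℝ) ≤ Real.exp (r ^ p / 2) :=
    Real.pow_div_factorial_le_exp _ (by positivity) n
  have h2 : Real.exp (-(r ^ p / 2)) ≤ ((r ^ p / 2) ^ n / (n.factorial : ℝ))⁻¹ := by
    rw [Real.exp_neg]
    exact inv_anti₀ (by positivity) h1
  refine h2.trans (le_of_eq ?_)
  have h3 : r ^ (-(p * n)) = ((r ^ p) ^ n)⁻¹ := by
    rw [Real.rpow_neg hr.le, ← Real.rpow_natCast (r ^ p) n, ← Real.rpow_mul hr.le]
  rw [h3]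
  have h4 : (0:ℝ) < (r ^ p) ^ n := by positivity
  have h5 : (0:ℝ) < (n.factorial : ℝ) := by positivity
  field_simp
  rw [← mul_pow, div_mul_cancel₀ _ (two_ne_zero : (2:ℝ) ≠ 0)]

/-- `t · exp(vt − t^b/2) → 0` as `t → ∞` whenever `b > 1`. -/
lemma tendsto_mul_exp_sub_rpow {v b : ℝ} (hb : 1 < b) :
    Tendsto (fun t : ℝ => t * Real.exp (v * t - t ^ b / 2)) atTop (nhds 0) := by
  have hexp : Tendsto (fun t : ℝ => (v + 1) * t - t ^ b / 2) atTop atBot := by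
    apply tendsto_atBot_mono' atTop (f₁ := fun t : ℝ => -t) ?_ ?_
    · filter_upwards [eventually_ge_atTop (1:ℝ),
        (tendsto_rpow_atTop (show (0:ℝ) < b - 1 by linarith)).eventually_ge_atTop
          (2 * (v + 2))] with t ht1 ht2
      have htb : t ^ b = t * t ^ (b - 1) := by
        nth_rewrite 2 [← Real.rpow_one t]
        rw [← Real.rpow_add (by linarith)]
        norm_num
      have h2 : 2 * (v + 2) * t ≤ t ^ (b - 1) * t :=
        mul_le_mul_of_nonneg_right ht2 (by linarith)
      nlinarith [htb]
    · exact tendsto_neg_atTop_atBot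
  have h0 : Tendsto (fun t : ℝ => Real.exp ((v + 1) * t - t ^ b / 2)) atTop (nhds 0) :=
    Real.tendsto_exp_atBot.comp hexp
  apply tendsto_of_tendsto_of_tendsto_of_le_of_le' tendsto_const_nhds h0
  · filter_upwards [eventually_ge_atTop (0:ℝ)] with t ht
    positivity
  · filter_upwards [eventually_ge_atTop (0:ℝ)] with t ht
    have h1 : t ≤ Real.exp t := by linarith [Real.add_one_le_exp t]
    calc t * Real.exp (v * t - t ^ b / 2)
        ≤ Real.exp t * Real.exp (v * t - t ^ b / 2) :=
          mul_le_mul_of_nonneg_right h1 (Real.exp_pos _).le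
      _ = Real.exp ((v + 1) * t - t ^ b / 2) := by rw [← Real.exp_add]; ring_nf

/-- `c · t^e → 0` as `t → ∞` for `e < 0`. -/
lemma tendsto_const_mul_rpow_neg {c e : ℝ} (he : e < 0) :
    Tendsto (fun t : ℝ => c * t ^ e) atTop (nhds 0) := by
  have h := (tendsto_rpow_neg_atTop (show 0 < -e by linarith)).const_mul c
  simp only [neg_neg, mul_zero] at h
  exact h

set_option maxHeartbeats 2000000 in
/-- LC2 for the one-step iterated bound with `σ = (2d+2)/(α+2)` and `α > 2d`:
every power law `r = t^γ` with `γ > (α+2)/(α−2d)` satisfies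
`lim_{t→∞} t ∫_{t^γ}^∞ r^{d−1} 𝒞(r,t) dr = 0`, and the integral is finite for
every `t > 0` (Appendix D.2 of the paper). -/
theorem lc2_for_iterated_bound (d : ℕ) (hd : 1 ≤ d) (α : ℝ) (hα : 2 * (d : ℝ) < α)
    (X K v : ℝ) (hX : 0 < X) (hK : 0 < K) (hv : 0 < v) :
    ∀ γ : ℝ, (α + 2) / (α - 2 * d) < γ →
      (∀ t : ℝ, 0 < t →
        IntegrableOn
          (fun r : ℝ => r ^ (d - 1) * lrBound X K v ((2 * d + 2) / (α + 2)) α d r t)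
          (Set.Ioi (t ^ γ))) ∧
      Filter.Tendsto
        (fun t : ℝ => t * ∫ r in Set.Ioi (t ^ γ),
          r ^ (d - 1) * lrBound X K v ((2 * d + 2) / (α + 2)) α d r t)
        Filter.atTop (nhds 0) := by
  intro γ hγ
  set σ : ℝ := (2 * d + 2) / (α + 2) with hσdef
  have hd1 : (1:ℝ) ≤ d := by exact_mod_cast hd
  have hα2 : (0:ℝ) < α + 2 := by linarith
  have hαd : (0:ℝ) < α - 2 * d := by linarith
  have hσeq : σ * (α + 2) = 2 * (d:ℝ) + 2 := by
    rw [hσdef]; field_simp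
  have hσpos : 0 < σ := by rw [hσdef]; positivity
  have hσ1 : σ < 1 := by rw [hσdef, div_lt_one hα2]; linarith
  have hp : 0 < 1 - σ := by linarith
  have hσα : σ * α = 2 * (d:ℝ) + 2 - 2 * σ := by linarith [hσeq]
  have hγ' : α + 2 < γ * (α - 2 * d) := (div_lt_iff₀ hαd).mp hγ
  have hpα : (1 - σ) * (α + 2) = α - 2 * (d:ℝ) := by linear_combination (-1) * hσeq
  have hγp : 1 < γ * (1 - σ) := by
    rw [← hpα, ← mul_assoc] at hγ'
    have := (mul_lt_mul_iff_left₀ hα2).mp (by linarith [hγ'] : 1 * (α + 2) < γ * (1 - σ) * (α + 2))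
    linarith
  have hγpos : 0 < γ := by nlinarith [hγp, hp, hσ1]
  have hd2 : (0:ℝ) < (d:ℝ) + 2 := by linarith
  -- exponent facts
  have hq1lt : (d:ℝ) - 1 - σ * α < -1 := by linarith [hσα, hσ1, hd1]
  have hq2lt : (d:ℝ) - 1 - σ * α + σ * d < -1 := by
    have h := mul_pos hp hd2
    nlinarith [hσα]
  have he2 : 2 + γ * (((d:ℝ) - 1 - σ * α) + 1) < 0 := by
    have hfact : 2 * (α - 2 * d) ≤ (α + 2) * ((d:ℝ) + 2 - 2 * σ) := by nlinarith [hσeq, hd1, hα]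
    have hpos : (0:ℝ) < (d:ℝ) + 2 - 2 * σ := by linarith [hσ1, hd1]
    have hm := mul_lt_mul_of_pos_right hγ' hpos
    have h2 : 2 < γ * ((d:ℝ) + 2 - 2 * σ) := by
      have h3 : 2 * (α - 2 * d) < γ * ((d:ℝ) + 2 - 2 * σ) * (α - 2 * d) := by nlinarith [hm, hfact]
      exact (mul_lt_mul_iff_left₀ hαd).mp h3
    have hσαγ : γ * (σ * α) = γ * (2 * (d:ℝ) + 2 - 2 * σ) := by rw [hσα]
    nlinarith [h2, hσαγ]
  have he3 : 2 + (d:ℝ) + γ * (((d:ℝ) - 1 - σ * α + σ * d) + 1) < 0 := by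
    have ha2' : ((d:ℝ) - 1 - σ * α + σ * d) + 1 = -(((d:ℝ) + 2) * (1 - σ)) := by
      linarith [hσα]
    rw [ha2']
    nlinarith [hγp, hd1]
  -- comparison exponent for the exponential term
  set n : ℕ := Nat.ceil ((d:ℝ) / (1 - σ)) + 1 with hndef
  have hn : (d:ℝ) < (1 - σ) * n := by
    have h1 : (d:ℝ) / (1 - σ) ≤ (Nat.ceil ((d:ℝ) / (1 - σ)) : ℝ) := Nat.le_ceil _
    have h2 : (d:ℝ) / (1 - σ) < (n:ℝ) := by
      rw [hndef]; push_cast; linarith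
    calc (d:ℝ) = ((d:ℝ) / (1 - σ)) * (1 - σ) := by field_simp
      _ < (n:ℝ) * (1 - σ) := mul_lt_mul_of_pos_right h2 hp
      _ = (1 - σ) * n := by ring
  have hq3lt : (d:ℝ) - 1 + -((1 - σ) * n) < -1 := by linarith
  have hCn : (0:ℝ) < (n.factorial : ℝ) * 2 ^ n := by positivity
  have hD : (0:ℝ) < (1 - σ) * n - d := by linarith
  -- integrability of the exponential piece
  have hIexp : ∀ t : ℝ, 0 < t →
      IntegrableOn (fun r : ℝ => r ^ ((d:ℝ) - 1) * Real.exp (-(r ^ (1 - σ))))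
        (Set.Ioi (t ^ γ)) := by
    intro t ht
    have hR : 0 < t ^ γ := Real.rpow_pos_of_pos ht γ
    apply Integrable.mono'
      ((integrableOn_Ioi_rpow_of_lt hq3lt hR).const_mul ((n.factorial : ℝ) * 2 ^ n))
    · apply AEStronglyMeasurable.mul
      · fun_prop
      · exact ((by fun_prop : Measurable fun r : ℝ => r ^ (1 - σ)).neg.exp).aestronglyMeasurable
    · filter_upwards [ae_restrict_mem measurableSet_Ioi] with r hr
      have hr0 : 0 < r := hR.trans hr
      rw [Real.norm_eq_abs, abs_of_nonneg (by positivity)]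
      calc r ^ ((d:ℝ) - 1) * Real.exp (-(r ^ (1 - σ)))
          ≤ r ^ ((d:ℝ) - 1) * Real.exp (-(r ^ (1 - σ) / 2)) := by
            gcongr
            · linarith [(Real.rpow_pos_of_pos hr0 (1 - σ)).le]
        _ ≤ r ^ ((d:ℝ) - 1) * ((n.factorial : ℝ) * 2 ^ n * r ^ (-((1 - σ) * n))) := by
            gcongr
            exact exp_rpow_tail_bound n hr0
        _ = (n.factorial : ℝ) * 2 ^ n * r ^ ((d:ℝ) - 1 + -((1 - σ) * n)) := by
            rw [Real.rpow_add hr0]; ring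
  -- the three pieces of the integrand and their integrability
  have hI : ∀ t : ℝ, 0 < t →
      IntegrableOn (fun r : ℝ =>
        (2 * X * Real.exp (v * t)) * (r ^ ((d:ℝ) - 1) * Real.exp (-(r ^ (1 - σ)))))
        (Set.Ioi (t ^ γ)) ∧
      IntegrableOn (fun r : ℝ => (K * t) * r ^ ((d:ℝ) - 1 - σ * α)) (Set.Ioi (t ^ γ)) ∧
      IntegrableOn (fun r : ℝ => (K * t * (v * t) ^ d) * r ^ ((d:ℝ) - 1 - σ * α + σ * d))
        (Set.Ioi (t ^ γ)) := by
    intro t ht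
    have hR : 0 < t ^ γ := Real.rpow_pos_of_pos ht γ
    exact ⟨(hIexp t ht).const_mul _,
      (integrableOn_Ioi_rpow_of_lt hq1lt hR).const_mul _,
      (integrableOn_Ioi_rpow_of_lt hq2lt hR).const_mul _⟩
  -- pointwise decomposition of the integrand
  have hsplit : ∀ t : ℝ, 0 < t → Set.EqOn
      (fun r : ℝ =>
        (2 * X * Real.exp (v * t)) * (r ^ ((d:ℝ) - 1) * Real.exp (-(r ^ (1 - σ))))
        + (K * t) * r ^ ((d:ℝ) - 1 - σ * α)
        + (K * t * (v * t) ^ d) * r ^ ((d:ℝ) - 1 - σ * α + σ * d))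
      (fun r : ℝ => r ^ (d - 1) * lrBound X K v σ α d r t)
      (Set.Ioi (t ^ γ)) := by
    intro t ht r hr
    have hR : 0 < t ^ γ := Real.rpow_pos_of_pos ht γ
    have hr0 : 0 < r := hR.trans hr
    have hnp : (r : ℝ) ^ (d - 1) = r ^ ((d:ℝ) - 1) := by
      rw [← Real.rpow_natCast r (d - 1)]
      congr 1
      rw [Nat.cast_sub hd, Nat.cast_one]
    have e1 : Real.exp (v * t - r ^ (1 - σ)) = Real.exp (v * t) * Real.exp (-(r ^ (1 - σ))) := by
      rw [← Real.exp_add]; ring_nf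
    have e2 : r ^ ((d:ℝ) - 1 - σ * α) = r ^ ((d:ℝ) - 1) * r ^ (-(σ * α)) := by
      rw [← Real.rpow_add hr0]; congr 1 <;> ring
    have e3 : r ^ ((d:ℝ) - 1 - σ * α + σ * (d:ℝ))
        = r ^ ((d:ℝ) - 1) * r ^ (-(σ * α)) * r ^ (σ * (d:ℝ)) := by
      rw [← Real.rpow_add hr0, ← Real.rpow_add hr0]; congr 1 <;> ring
    simp only [lrBound, hnp, e1, e2, e3]
    ring
  have hIsum : ∀ t : ℝ, 0 < t →
      IntegrableOn (fun r : ℝ =>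
        (2 * X * Real.exp (v * t)) * (r ^ ((d:ℝ) - 1) * Real.exp (-(r ^ (1 - σ))))
        + (K * t) * r ^ ((d:ℝ) - 1 - σ * α)
        + (K * t * (v * t) ^ d) * r ^ ((d:ℝ) - 1 - σ * α + σ * d)) (Set.Ioi (t ^ γ)) :=
    fun t ht => (((hI t ht).1.add (hI t ht).2.1).add (hI t ht).2.2)
  have hpart1 : ∀ t : ℝ, 0 < t →
      IntegrableOn (fun r : ℝ => r ^ (d - 1) * lrBound X K v σ α d r t) (Set.Ioi (t ^ γ)) :=
    fun t ht => (hIsum t ht).congr_fun (hsplit t ht) measurableSet_Ioi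
  refine ⟨hpart1, ?_⟩
  -- value of the integral
  have hIntEq : ∀ t : ℝ, 0 < t →
      (∫ r in Set.Ioi (t ^ γ), r ^ (d - 1) * lrBound X K v σ α d r t)
      = (2 * X * Real.exp (v * t))
          * (∫ r in Set.Ioi (t ^ γ), r ^ ((d:ℝ) - 1) * Real.exp (-(r ^ (1 - σ))))
        + (K * t) * (-(t ^ γ) ^ (((d:ℝ) - 1 - σ * α) + 1) / (((d:ℝ) - 1 - σ * α) + 1))
        + (K * t * (v * t) ^ d)
          * (-(t ^ γ) ^ (((d:ℝ) - 1 - σ * α + σ * d) + 1)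
              / (((d:ℝ) - 1 - σ * α + σ * d) + 1)) := by
    intro t ht
    have hR : 0 < t ^ γ := Real.rpow_pos_of_pos ht γ
    have hAB : IntegrableOn (fun r : ℝ =>
        (2 * X * Real.exp (v * t)) * (r ^ ((d:ℝ) - 1) * Real.exp (-(r ^ (1 - σ))))
        + (K * t) * r ^ ((d:ℝ) - 1 - σ * α)) (Set.Ioi (t ^ γ)) :=
      (hI t ht).1.add (hI t ht).2.1
    rw [← setIntegral_congr_fun measurableSet_Ioi (hsplit t ht)]
    rw [integral_add hAB (hI t ht).2.2,
      integral_add (hI t ht).1 (hI t ht).2.1,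
      integral_const_mul, integral_const_mul, integral_const_mul,
      integral_Ioi_rpow_of_lt hq1lt hR, integral_Ioi_rpow_of_lt hq2lt hR]
  -- tail bound for the exponential integral
  have hb1 : ∀ t : ℝ, 1 ≤ t →
      (∫ r in Set.Ioi (t ^ γ), r ^ ((d:ℝ) - 1) * Real.exp (-(r ^ (1 - σ))))
      ≤ ((n.factorial : ℝ) * 2 ^ n / ((1 - σ) * n - d))
          * Real.exp (-(t ^ (γ * (1 - σ)) / 2)) := by
    intro t ht1
    have ht0 : (0:ℝ) < t := lt_of_lt_of_le one_pos ht1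
    have hR : 0 < t ^ γ := Real.rpow_pos_of_pos ht0 γ
    have hR1 : 1 ≤ t ^ γ := by
      calc (1:ℝ) = 1 ^ γ := (Real.one_rpow γ).symm
        _ ≤ t ^ γ := Real.rpow_le_rpow zero_le_one ht1 hγpos.le
    have hmono : (∫ r in Set.Ioi (t ^ γ), r ^ ((d:ℝ) - 1) * Real.exp (-(r ^ (1 - σ))))
        ≤ ∫ r in Set.Ioi (t ^ γ),
            (Real.exp (-((t ^ γ) ^ (1 - σ) / 2)) * ((n.factorial : ℝ) * 2 ^ n))
              * r ^ ((d:ℝ) - 1 + -((1 - σ) * n)) := by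
      apply setIntegral_mono_on (hIexp t ht0)
        ((integrableOn_Ioi_rpow_of_lt hq3lt hR).const_mul _) measurableSet_Ioi
      intro r hr
      have hr0 : 0 < r := hR.trans hr
      calc r ^ ((d:ℝ) - 1) * Real.exp (-(r ^ (1 - σ)))
          = r ^ ((d:ℝ) - 1)
              * (Real.exp (-(r ^ (1 - σ) / 2)) * Real.exp (-(r ^ (1 - σ) / 2))) := by
            rw [← Real.exp_add]; ring_nf
        _ ≤ r ^ ((d:ℝ) - 1)
              * (Real.exp (-((t ^ γ) ^ (1 - σ) / 2))
                  * ((n.factorial : ℝ) * 2 ^ n * r ^ (-((1 - σ) * n)))) := by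
            gcongr
            · have hrr : t ^ γ < r := hr
              linarith
            · exact exp_rpow_tail_bound n hr0
        _ = (Real.exp (-((t ^ γ) ^ (1 - σ) / 2)) * ((n.factorial : ℝ) * 2 ^ n))
              * r ^ ((d:ℝ) - 1 + -((1 - σ) * n)) := by
            rw [Real.rpow_add hr0]; ring
    have hval : (∫ r in Set.Ioi (t ^ γ),
        (Real.exp (-((t ^ γ) ^ (1 - σ) / 2)) * ((n.factorial : ℝ) * 2 ^ n))
          * r ^ ((d:ℝ) - 1 + -((1 - σ) * n)))
        = (Real.exp (-((t ^ γ) ^ (1 - σ) / 2)) * ((n.factorial : ℝ) * 2 ^ n))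
          * (-(t ^ γ) ^ (((d:ℝ) - 1 + -((1 - σ) * n)) + 1)
              / (((d:ℝ) - 1 + -((1 - σ) * n)) + 1)) := by
      rw [integral_const_mul, integral_Ioi_rpow_of_lt hq3lt hR]
    have hle1 : (t ^ γ) ^ (((d:ℝ) - 1 + -((1 - σ) * n)) + 1) ≤ 1 :=
      Real.rpow_le_one_of_one_le_of_nonpos hR1 (by linarith)
    have hx0 : 0 < (t ^ γ) ^ (((d:ℝ) - 1 + -((1 - σ) * n)) + 1) :=
      Real.rpow_pos_of_pos hR _
    have hqe : ((d:ℝ) - 1 + -((1 - σ) * n)) + 1 = -((1 - σ) * n - d) := by ring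
    have hdiv : -(t ^ γ) ^ (((d:ℝ) - 1 + -((1 - σ) * n)) + 1)
          / (((d:ℝ) - 1 + -((1 - σ) * n)) + 1)
        = (t ^ γ) ^ (((d:ℝ) - 1 + -((1 - σ) * n)) + 1) / ((1 - σ) * n - d) := by
      rw [hqe, neg_div_neg_eq]
    have hrw : t ^ (γ * (1 - σ)) = (t ^ γ) ^ (1 - σ) := Real.rpow_mul ht0.le γ (1 - σ)
    calc (∫ r in Set.Ioi (t ^ γ), r ^ ((d:ℝ) - 1) * Real.exp (-(r ^ (1 - σ))))
        ≤ (Real.exp (-((t ^ γ) ^ (1 - σ) / 2)) * ((n.factorial : ℝ) * 2 ^ n))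
          * (-(t ^ γ) ^ (((d:ℝ) - 1 + -((1 - σ) * n)) + 1)
              / (((d:ℝ) - 1 + -((1 - σ) * n)) + 1)) := hmono.trans hval.le
      _ = (Real.exp (-((t ^ γ) ^ (1 - σ) / 2)) * ((n.factorial : ℝ) * 2 ^ n) / ((1 - σ) * n - d))
          * (t ^ γ) ^ (((d:ℝ) - 1 + -((1 - σ) * n)) + 1) := by rw [hdiv]; ring
      _ ≤ (Real.exp (-((t ^ γ) ^ (1 - σ) / 2)) * ((n.factorial : ℝ) * 2 ^ n) / ((1 - σ) * n - d))
          * 1 := by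
            apply mul_le_mul_of_nonneg_left hle1
            positivity
      _ = ((n.factorial : ℝ) * 2 ^ n / ((1 - σ) * n - d))
          * Real.exp (-(t ^ (γ * (1 - σ)) / 2)) := by rw [hrw]; ring
  -- the three limits
  have T1 : Tendsto (fun t : ℝ => (2 * X * Real.exp (v * t) * t)
      * (∫ r in Set.Ioi (t ^ γ), r ^ ((d:ℝ) - 1) * Real.exp (-(r ^ (1 - σ)))))
      atTop (nhds 0) := by
    have hupper : Tendsto (fun t : ℝ =>
        (2 * X * ((n.factorial : ℝ) * 2 ^ n / ((1 - σ) * n - d)))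
          * (t * Real.exp (v * t - t ^ (γ * (1 - σ)) / 2))) atTop (nhds 0) := by
      have := (tendsto_mul_exp_sub_rpow (v := v) hγp).const_mul
        (2 * X * ((n.factorial : ℝ) * 2 ^ n / ((1 - σ) * n - d)))
      simpa using this
    apply tendsto_of_tendsto_of_tendsto_of_le_of_le' tendsto_const_nhds hupper
    · filter_upwards [eventually_ge_atTop (1:ℝ)] with t ht1
      have ht0 : (0:ℝ) < t := lt_of_lt_of_le one_pos ht1
      have hR : 0 < t ^ γ := Real.rpow_pos_of_pos ht0 γ
      have hnn : 0 ≤ ∫ r in Set.Ioi (t ^ γ), r ^ ((d:ℝ) - 1) * Real.exp (-(r ^ (1 - σ))) := by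
        apply setIntegral_nonneg measurableSet_Ioi
        intro r hr
        have hr0 : 0 < r := hR.trans hr
        positivity
      positivity
    · filter_upwards [eventually_ge_atTop (1:ℝ)] with t ht1
      have ht0 : (0:ℝ) < t := lt_of_lt_of_le one_pos ht1
      calc (2 * X * Real.exp (v * t) * t)
            * (∫ r in Set.Ioi (t ^ γ), r ^ ((d:ℝ) - 1) * Real.exp (-(r ^ (1 - σ))))
          ≤ (2 * X * Real.exp (v * t) * t)
            * (((n.factorial : ℝ) * 2 ^ n / ((1 - σ) * n - d))
                * Real.exp (-(t ^ (γ * (1 - σ)) / 2))) := by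
              apply mul_le_mul_of_nonneg_left (hb1 t ht1)
              positivity
        _ = (2 * X * ((n.factorial : ℝ) * 2 ^ n / ((1 - σ) * n - d)))
            * (t * Real.exp (v * t - t ^ (γ * (1 - σ)) / 2)) := by
              rw [show v * t - t ^ (γ * (1 - σ)) / 2
                  = v * t + -(t ^ (γ * (1 - σ)) / 2) from by ring, Real.exp_add]
              ring
  have T2 : Tendsto (fun t : ℝ =>
      (-(K / (((d:ℝ) - 1 - σ * α) + 1))) * t ^ (2 + γ * (((d:ℝ) - 1 - σ * α) + 1)))
      atTop (nhds 0) := tendsto_const_mul_rpow_neg he2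
  have T3 : Tendsto (fun t : ℝ =>
      (-(K * v ^ d / (((d:ℝ) - 1 - σ * α + σ * d) + 1)))
        * t ^ (2 + (d:ℝ) + γ * (((d:ℝ) - 1 - σ * α + σ * d) + 1)))
      atTop (nhds 0) := tendsto_const_mul_rpow_neg he3
  have heq : ∀ᶠ t in atTop, t * ∫ r in Set.Ioi (t ^ γ), r ^ (d - 1) * lrBound X K v σ α d r t
      = (2 * X * Real.exp (v * t) * t)
          * (∫ r in Set.Ioi (t ^ γ), r ^ ((d:ℝ) - 1) * Real.exp (-(r ^ (1 - σ))))
        + (-(K / (((d:ℝ) - 1 - σ * α) + 1))) * t ^ (2 + γ * (((d:ℝ) - 1 - σ * α) + 1))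
        + (-(K * v ^ d / (((d:ℝ) - 1 - σ * α + σ * d) + 1)))
          * t ^ (2 + (d:ℝ) + γ * (((d:ℝ) - 1 - σ * α + σ * d) + 1)) := by
    filter_upwards [eventually_ge_atTop (1:ℝ)] with t ht1
    have ht0 : (0:ℝ) < t := lt_of_lt_of_le one_pos ht1
    rw [hIntEq t ht0]
    have hr1 : (t ^ γ) ^ (((d:ℝ) - 1 - σ * α) + 1) = t ^ (γ * (((d:ℝ) - 1 - σ * α) + 1)) :=
      (Real.rpow_mul ht0.le γ _).symm
    have hr2 : (t ^ γ) ^ (((d:ℝ) - 1 - σ * α + σ * d) + 1)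
        = t ^ (γ * (((d:ℝ) - 1 - σ * α + σ * d) + 1)) := (Real.rpow_mul ht0.le γ _).symm
    have ht2 : t ^ (2 + γ * (((d:ℝ) - 1 - σ * α) + 1))
        = t * t * t ^ (γ * (((d:ℝ) - 1 - σ * α) + 1)) := by
      rw [show (2:ℝ) + γ * (((d:ℝ) - 1 - σ * α) + 1)
          = 1 + (1 + γ * (((d:ℝ) - 1 - σ * α) + 1)) from by ring,
        Real.rpow_add ht0, Real.rpow_add ht0, Real.rpow_one]
      ring
    have ht3 : t ^ (2 + (d:ℝ) + γ * (((d:ℝ) - 1 - σ * α + σ * d) + 1))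
        = t * t * t ^ (d:ℕ) * t ^ (γ * (((d:ℝ) - 1 - σ * α + σ * d) + 1)) := by
      rw [show (2:ℝ) + (d:ℝ) + γ * (((d:ℝ) - 1 - σ * α + σ * d) + 1)
          = 1 + (1 + ((d:ℝ) + γ * (((d:ℝ) - 1 - σ * α + σ * d) + 1))) from by ring,
        Real.rpow_add ht0, Real.rpow_add ht0, Real.rpow_add ht0, Real.rpow_one,
        Real.rpow_natCast]
      ring
    have hvt : (v * t) ^ d = v ^ d * t ^ (d:ℕ) := mul_pow v t d
    have hne1 : ((d:ℝ) - 1 - σ * α) + 1 ≠ 0 := by linarith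
    have hne2 : ((d:ℝ) - 1 - σ * α + σ * d) + 1 ≠ 0 := by linarith
    rw [hr1, hr2, ht2, ht3, hvt]
    ring
  refine Tendsto.congr' (Filter.EventuallyEq.symm heq) ?_
  have := (T1.add T2).add T3
  simpa using this
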